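/- arXiv:2212.00494 — 5 statements merged into one kernel-verified Lean document; each statement's English description precedes it below -/
import Mathlib

section
/- Let α, β, λ₁, λ₂, λ₃ be real numbers with α ≠ 0. If the following equations hold: -(α²+ (3/4)β²)λ₂ + (α²+(1/2)β²)λ₃ = 0; (α²+(3/4)β²)λ₁ - (1/4)αβλ₂ = 0; -α(α²+(1/2)β²)λ₁ + β(α²+(1/2)β²)λ₂ - (3/4)α²βλ₃ = 0; αβλ₁ - (α²+β²)λ₃ = 0; -β((5/4)α²+(1/2)β²)λ₁ + (1/2)α(α²+β²)λ₂ - (1/2)α(α²+(1/2)β²)λ₃ = 0; (3/2)αβλ₁ - (α²+(1/2)β²)λ₂ = 0, then λ₁ = λ₂ = λ₃ = 0. -/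
theorem stmt_0 (α β l1 l2 l3 : ℝ) (hα : α ≠ 0)
    (h1 : -(α^2 + (3/4)*β^2)*l2 + (α^2 + (1/2)*β^2)*l3 = 0)
    (h2 : (α^2 + (3/4)*β^2)*l1 - (1/4)*α*β*l2 = 0)
    (h3 : -α*(α^2 + (1/2)*β^2)*l1 + β*(α^2 + (1/2)*β^2)*l2 - (3/4)*α^2*β*l3 = 0)
    (h4 : α*β*l1 - (α^2 + β^2)*l3 = 0)
    (h5 : -β*((5/4)*α^2 + (1/2)*β^2)*l1 + (1/2)*α*(α^2 + β^2)*l2 - (1/2)*α*(α^2 + (1/2)*β^2)*l3 = 0)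
    (h6 : (3/2)*α*β*l1 - (α^2 + (1/2)*β^2)*l2 = 0) :
    l1 = 0 ∧ l2 = 0 ∧ l3 = 0 := by
  have hpos : (0:ℝ) < α^4 + (7/8)*α^2*β^2 + (3/8)*β^4 := by positivity
  have key : (α^4 + (7/8)*α^2*β^2 + (3/8)*β^4) * l1 = 0 := by
    linear_combination (α^2 + (1/2)*β^2) * h2 - (1/4)*α*β * h6
  have hl1 : l1 = 0 := by
    rcases mul_eq_zero.mp key with h | h
    · exact absurd h (ne_of_gt hpos)
    · exact h
  have hc : (0:ℝ) < α^2 + (1/2)*β^2 := by positivity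
  have hl2 : l2 = 0 := by
    have : (α^2 + (1/2)*β^2) * l2 = 0 := by linear_combination -h6 + (3/2)*α*β*hl1
    rcases mul_eq_zero.mp this with h | h
    · exact absurd h (ne_of_gt hc)
    · exact h
  have hd : (0:ℝ) < α^2 + β^2 := by positivity
  have hl3 : l3 = 0 := by
    have : (α^2 + β^2) * l3 = 0 := by linear_combination -h4 + α*β*hl1
    rcases mul_eq_zero.mp this with h | h
    · exact absurd h (ne_of_gt hd)
    · exact h
  exact ⟨hl1, hl2, hl3⟩
end

section
/- Let α, β, λ₁, λ₂, λ₃ be real numbers with α ≠ 0. If the following equations hold: -(α²+(1/2)β²)λ₂ + α²λ₃ = 0; (α²+(1/2)β²)λ₁ - αβλ₂ = 0; -α³λ₁ + β³λ₂ = 0; βλ₁ + αλ₃ = 0; β((1/2)α²-β²)λ₁ + (1/2)α³λ₂ + (1/2)α(α²-β²)λ₃ = 0; (β²-α²)λ₂ = 0, then λ₁ = λ₂ = λ₃ = 0. -/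
theorem stmt_1 (α β l1 l2 l3 : ℝ) (hα : α ≠ 0)
    (h1 : -(α^2 + (1/2)*β^2)*l2 + α^2*l3 = 0)
    (h2 : (α^2 + (1/2)*β^2)*l1 - α*β*l2 = 0)
    (h3 : -α^3*l1 + β^3*l2 = 0)
    (h4 : β*l1 + α*l3 = 0)
    (h5 : β*((1/2)*α^2 - β^2)*l1 + (1/2)*α^3*l2 + (1/2)*α*(α^2 - β^2)*l3 = 0)
    (h6 : (β^2 - α^2)*l2 = 0) :
    l1 = 0 ∧ l2 = 0 ∧ l3 = 0 := by
  have hα2 : α^2 > 0 := by positivity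
  have hl2 : l2 = 0 := by
    rcases mul_eq_zero.mp h6 with hb | hl2
    · -- β^2 = α^2
      have hb2 : β^2 = α^2 := by linarith
      -- l3 = 3/2 l2 from h1; βl1 = -(3/2)αl2 from h4; h2*β gives contradiction
      have e1 : α^2 * l3 = (3/2) * α^2 * l2 := by
        linear_combination h1 + (1/2)*l2*hb
      have e3 : l3 = (3/2) * l2 :=
        mul_left_cancel₀ (ne_of_gt hα2) (by linarith [e1])
      have e4 : β * l1 = -(3/2) * α * l2 := by
        have := h4; rw [e3] at this; linarith
      have e5 : (3/2) * α^2 * (β * l1) = α * β^2 * l2 := by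
        linear_combination β*h2 - (1/2)*β*l1*hb
      have e6 : (13/4) * (α^2 * α) * l2 = 0 := by
        rw [e4] at e5; linear_combination -e5 - α*l2*hb
      have : α^2 * α ≠ 0 := mul_ne_zero (ne_of_gt hα2) hα
      have := mul_eq_zero.mp (by linarith [e6] : (α^2*α) * ((13/4)*l2) = 0)
      rcases this with h | h
      · exact absurd h ‹α^2*α ≠ 0›
      · linarith
    · exact hl2
  have hl3 : l3 = 0 := by
    have : α^2 * l3 = 0 := by rw [hl2] at h1; linarith
    rcases mul_eq_zero.mp this with h | h
    · exact absurd h (ne_of_gt hα2)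
    · exact h
  have hl1 : l1 = 0 := by
    have hpos : α^2 + (1/2)*β^2 > 0 := by positivity
    have : (α^2 + (1/2)*β^2) * l1 = 0 := by rw [hl2] at h2; linarith
    rcases mul_eq_zero.mp this with h | h
    · exact absurd h (ne_of_gt hpos)
    · exact h
  exact ⟨hl1, hl2, hl3⟩
end

section
/- Let α, β, γ, λ₁, λ₂, λ₃ be real numbers with γ ≠ 0, α ≠ 0, β ≠ 0. Suppose (2γ²+αβ)λ₂ + γ(α−2β)λ₃ = 0 and (2β²+γ²)λ₂ + βγλ₃ = 0 and γ(γ²+(1/2)αβ)λ₁ = 0 and β(γ²+αβ)λ₁ = 0 and αβγλ₁ = 0. Then λ₁ = 0, and moreover: if α ≠ 4β then λ₂ = λ₃ = 0, while if α = 4β then λ₃ = −((2β²+γ²)/(βγ))·λ₂. -/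
theorem stmt_3 (α β γ l1 l2 l3 : ℝ) (hγ : γ ≠ 0) (hα : α ≠ 0) (hβ : β ≠ 0)
    (h1 : (2*γ^2 + α*β)*l2 + γ*(α - 2*β)*l3 = 0)
    (h2 : (2*β^2 + γ^2)*l2 + β*γ*l3 = 0)
    (h3 : γ*(γ^2 + (1/2)*α*β)*l1 = 0)
    (h4 : β*(γ^2 + α*β)*l1 = 0)
    (h5 : α*β*γ*l1 = 0) :
    l1 = 0 ∧ (α ≠ 4*β → l2 = 0 ∧ l3 = 0) ∧
      (α = 4*β → l3 = -((2*β^2 + γ^2)/(β*γ))*l2) := by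
  have hl1 : l1 = 0 := by
    have := h5
    simp [mul_eq_zero, hα, hβ, hγ] at this
    exact this
  refine ⟨hl1, ?_, ?_⟩
  · intro hne
    have hd : γ * (α - 4*β) * (β^2 + γ^2) ≠ 0 := by
      apply mul_ne_zero (mul_ne_zero hγ (sub_ne_zero.2 (by simpa using hne)))
      positivity
    have hl2 : l2 = 0 := by
      have key : γ * (α - 4*β) * (β^2 + γ^2) * l2 =
          -(β*γ * ((2*γ^2 + α*β)*l2 + γ*(α - 2*β)*l3) -
            γ*(α - 2*β) * ((2*β^2 + γ^2)*l2 + β*γ*l3)) := by ring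
      rw [h1, h2] at key
      simpa [hd] using key
    have hl3 : l3 = 0 := by
      have := h2
      rw [hl2] at this
      simp [mul_eq_zero, hβ, hγ] at this
      exact this
    exact ⟨hl2, hl3⟩
  · intro heq
    have hbg : β * γ ≠ 0 := mul_ne_zero hβ hγ
    field_simp
    linarith [h2]
end

section
/- Let α, β, λ₁, λ₂, λ₃ be real numbers with α ≠ 0, β ≠ 0. Suppose (1+(1/2)α(β−2))λ₂ + (β−α/2)λ₃ = 0 and (1/2+β(β−2))λ₂ − (1/2)βλ₃ = 0 and λ₁ = 0. If α = 4β and β ≠ 1, then λ₃ = ((α²−8α+8)/(2α))·λ₂. If β = 1 and α = 2, then λ₂ + λ₃ = 0. If α ≠ 4β and β ≠ 1, then λ₂ = λ₃ = 0. -/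
theorem stmt_11 (α β l1 l2 l3 : ℝ) (hα : α ≠ 0) (hβ : β ≠ 0)
    (h1 : (1 + (1/2)*α*(β - 2))*l2 + (β - α/2)*l3 = 0)
    (h2 : (1/2 + β*(β - 2))*l2 - (1/2)*β*l3 = 0)
    (h3 : l1 = 0) :
    (α = 4*β → β ≠ 1 → l3 = ((α^2 - 8*α + 8)/(2*α))*l2) ∧
    (β = 1 → α = 2 → l2 + l3 = 0) ∧
    (α ≠ 4*β → β ≠ 1 → l2 = 0 ∧ l3 = 0) := by
  refine ⟨?_, ?_, ?_⟩
  · intro hab _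
    subst hab
    have h4 : (2:ℝ)*(4*β) ≠ 0 := by
      simp [hβ]
    field_simp
    ring_nf
    ring_nf at h2
    nlinarith [h2, sq_nonneg β]
  · intro hb ha
    subst hb; subst ha
    linarith
  · intro hne hb1
    have hD : (α/4 - β)*(β - 1)^2 ≠ 0 := by
      apply mul_ne_zero
      · intro h; apply hne; linarith [sub_eq_zero.mp h]
      · exact pow_ne_zero _ (sub_ne_zero.mpr hb1)
    have key : (α/4 - β)*(β - 1)^2 * l2 = 0 := by
      linear_combination (-β/2)*h1 - (β - α/2)*h2
    have hl2 : l2 = 0 := by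
      rcases mul_eq_zero.mp key with h | h
      · exact absurd h hD
      · exact h
    refine ⟨hl2, ?_⟩
    rw [hl2] at h2
    have h5 : β * l3 = 0 := by linarith
    rcases mul_eq_zero.mp h5 with h | h
    · exact absurd h hβ
    · exact h
end

section
/- Let β, δ, γ, λ₁, λ₂, λ₃ be real numbers with δ ≠ 0 and β ≠ 0. Suppose λ₂ = λ₃, βλ₁ + δλ₃ = 0, and γλ₁ = 0, together with βδγλ₁ − β²γλ₂ + (βγ(2γ+β)+δ²γ)λ₃ = 0. If γ ≠ 0 then λ₁ = λ₂ = λ₃ = 0; if γ = 0 then λ₂ = λ₃ = −(β/δ)λ₁. -/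
theorem stmt_15 (β δ γ l1 l2 l3 : ℝ) (hδ : δ ≠ 0) (hβ : β ≠ 0)
    (h1 : l2 = l3)
    (h2 : β*l1 + δ*l3 = 0)
    (h3 : γ*l1 = 0)
    (h4 : β*δ*γ*l1 - β^2*γ*l2 + (β*γ*(2*γ + β) + δ^2*γ)*l3 = 0) :
    (γ ≠ 0 → l1 = 0 ∧ l2 = 0 ∧ l3 = 0) ∧
    (γ = 0 → l2 = -(β/δ)*l1 ∧ l3 = -(β/δ)*l1) := by
  constructor
  · intro hγ
    have hl1 : l1 = 0 := by rcases mul_eq_zero.mp h3 with h | h; exact absurd h hγ; exact h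
    have hl3 : l3 = 0 := by
      have : δ * l3 = 0 := by rw [hl1] at h2; linarith
      rcases mul_eq_zero.mp this with h | h; exact absurd h hδ; exact h
    exact ⟨hl1, h1.trans hl3 ▸ by rw [h1, hl3], hl3⟩
  · intro hγ
    have hl3 : l3 = -(β/δ)*l1 := by field_simp; linarith
    exact ⟨h1.trans hl3, hl3⟩
end
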